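/- arXiv:1306.4543 — 3 statements merged into one kernel-verified Lean document; each statement's English description precedes it below -/
import Mathlib

section
/- Let S be a semigroup satisfying the identity x² = x³ for all x ∈ S, and suppose S is not idempotent (i.e., there exists a ∈ S with a·a ≠ a). Then the set M = {(p₁, p₂, p₃) ∈ S³ | p₁ = p₂ or p₁ = p₃} is not an algebraic set over S. -/
/-- A point `p : Fin n → S` satisfies the equation `(τ, σ)` if the evaluations of the two
terms (elements of the free semigroup on `n` generators) at `p` coincide. -/
def SatisfiesEquation {S : Type*} [Semigroup S] {n : ℕ}
    (e : FreeSemigroup (Fin n) × FreeSemigroup (Fin n)) (p : Fin n → S) : Prop :=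
  FreeSemigroup.lift p e.1 = FreeSemigroup.lift p e.2

/-- A set `Y ⊆ Sⁿ` is algebraic over `S` if it is the common solution set of some set of
equations in `n` variables over the language `{·}`. -/
def IsAlgebraicSet {S : Type*} [Semigroup S] {n : ℕ} (Y : Set (Fin n → S)) : Prop :=
  ∃ Eqs : Set (FreeSemigroup (Fin n) × FreeSemigroup (Fin n)),
    Y = {p | ∀ e ∈ Eqs, SatisfiesEquation e p}

theorem not_algebraic_of_sq_eq_cube {S : Type*} [Semigroup S]
    (hid : ∀ x : S, x * x = x * x * x) (hnotband : ∃ a : S, a * a ≠ a) :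
    ¬ IsAlgebraicSet {p : Fin 3 → S | p 0 = p 1 ∨ p 0 = p 2} := by
  obtain ⟨a, ha⟩ := hnotband
  have hne : a ≠ a * a := fun h => ha h.symm
  have hBA : (a * a) * a = a * a := (hid a).symm
  have hAB : a * (a * a) = a * a := by rw [← mul_assoc]; exact (hid a).symm
  have hBB : (a * a) * (a * a) = a * a := by rw [← mul_assoc, hBA, hBA]
  set p : Fin 3 → S := ![a, a, a * a] with hp
  set q : Fin 3 → S := ![a, a * a, a] with hq
  set r : Fin 3 → S := ![a, a * a, a * a] with hr
  have key : ∀ w : FreeSemigroup (Fin 3),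
      (FreeSemigroup.lift p w = a ∧ FreeSemigroup.lift q w = a ∧
        FreeSemigroup.lift r w = a) ∨
      (FreeSemigroup.lift p w = a ∧ FreeSemigroup.lift q w = a * a ∧
        FreeSemigroup.lift r w = a * a) ∨
      (FreeSemigroup.lift p w = a * a ∧ FreeSemigroup.lift q w = a ∧
        FreeSemigroup.lift r w = a * a) ∨
      (FreeSemigroup.lift p w = a * a ∧ FreeSemigroup.lift q w = a * a ∧
        FreeSemigroup.lift r w = a * a) := by
    intro w
    induction w using FreeSemigroup.recOnMul with
    | ih1 i =>
      fin_cases i <;> simp [hp, hq, hr, FreeSemigroup.lift_of]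
    | ih2 x y h1 h2 =>
      have prod : ∀ u v : S, (u = a ∨ u = a * a) → (v = a ∨ v = a * a) →
          u * v = a * a := by
        rintro u v (rfl | rfl) (rfl | rfl)
        · rfl
        · exact hAB
        · exact hBA
        · exact hBB
      have hx : FreeSemigroup.lift p (.of x) = a ∨ FreeSemigroup.lift p (.of x) = a * a := by
        rcases h1 with ⟨h, _, _⟩ | ⟨h, _, _⟩ | ⟨h, _, _⟩ | ⟨h, _, _⟩ <;> simp [h]
      have hy : FreeSemigroup.lift q (.of x) = a ∨ FreeSemigroup.lift q (.of x) = a * a := by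
        rcases h1 with ⟨_, h, _⟩ | ⟨_, h, _⟩ | ⟨_, h, _⟩ | ⟨_, h, _⟩ <;> simp [h]
      have hz : FreeSemigroup.lift r (.of x) = a ∨ FreeSemigroup.lift r (.of x) = a * a := by
        rcases h1 with ⟨_, _, h⟩ | ⟨_, _, h⟩ | ⟨_, _, h⟩ | ⟨_, _, h⟩ <;> simp [h]
      have hx' : FreeSemigroup.lift p y = a ∨ FreeSemigroup.lift p y = a * a := by
        rcases h2 with ⟨h, _, _⟩ | ⟨h, _, _⟩ | ⟨h, _, _⟩ | ⟨h, _, _⟩ <;> simp [h]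
      have hy' : FreeSemigroup.lift q y = a ∨ FreeSemigroup.lift q y = a * a := by
        rcases h2 with ⟨_, h, _⟩ | ⟨_, h, _⟩ | ⟨_, h, _⟩ | ⟨_, h, _⟩ <;> simp [h]
      have hz' : FreeSemigroup.lift r y = a ∨ FreeSemigroup.lift r y = a * a := by
        rcases h2 with ⟨_, _, h⟩ | ⟨_, _, h⟩ | ⟨_, _, h⟩ | ⟨_, _, h⟩ <;> simp [h]
      refine Or.inr (Or.inr (Or.inr ⟨?_, ?_, ?_⟩)) <;> rw [map_mul]
      · exact prod _ _ hx hx'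
      · exact prod _ _ hy hy'
      · exact prod _ _ hz hz'
  rintro ⟨Eqs, hE⟩
  have hpM : p ∈ {p : Fin 3 → S | p 0 = p 1 ∨ p 0 = p 2} := Or.inl (by simp [hp])
  have hqM : q ∈ {p : Fin 3 → S | p 0 = p 1 ∨ p 0 = p 2} := Or.inr (by simp [hq])
  rw [hE] at hpM hqM
  have hrM : r ∈ {p : Fin 3 → S | p 0 = p 1 ∨ p 0 = p 2} := by
    rw [hE]
    intro e he
    have h1 := hpM e he
    have h2 := hqM e he
    unfold SatisfiesEquation at h1 h2 ⊢
    rcases key e.1 with ⟨e1, e2, e3⟩ | ⟨e1, e2, e3⟩ | ⟨e1, e2, e3⟩ | ⟨e1, e2, e3⟩ <;>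
      rcases key e.2 with ⟨f1, f2, f3⟩ | ⟨f1, f2, f3⟩ | ⟨f1, f2, f3⟩ | ⟨f1, f2, f3⟩ <;>
      rw [e3, f3] <;>
      first
        | rfl
        | (rw [e1, f1] at h1; exact absurd h1 hne)
        | (rw [e1, f1] at h1; exact absurd h1.symm hne)
        | (rw [e2, f2] at h2; exact absurd h2 hne)
        | (rw [e2, f2] at h2; exact absurd h2.symm hne)
  rcases hrM with h | h <;> simp [hr] at h <;> exact hne h
end

section
/- Let S be a semigroup that does not satisfy the identity x² = x³, i.e., there exists a ∈ S with a·a ≠ a·a·a. Then the set M = {(p₁, p₂, p₃, p₄) ∈ S⁴ | p₁ = p₂ or p₃ = p₄} is not an algebraic set over S. -/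
section Aux

def expt {n : ℕ} (e : Fin n → ℕ) (w : FreeSemigroup (Fin n)) : ℕ :=
  Multiplicative.toAdd (FreeSemigroup.lift (fun j => Multiplicative.ofAdd (e j)) w)

lemma expt_of {n : ℕ} (e : Fin n → ℕ) (j : Fin n) : expt e (FreeSemigroup.of j) = e j := by
  simp [expt]

lemma expt_mul {n : ℕ} (e : Fin n → ℕ) (u v : FreeSemigroup (Fin n)) :
    expt e (u * v) = expt e u + expt e v := by
  simp [expt]

lemma expt_add {n : ℕ} (e f : Fin n → ℕ) (w : FreeSemigroup (Fin n)) :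
    expt (e + f) w = expt e w + expt f w := by
  refine FreeSemigroup.recOnMul w (fun j => ?_) (fun x y ih1 ih2 => ?_)
  · simp [expt_of]
  · simp only [expt_mul, ih1, ih2]; omega

def elen {n : ℕ} (w : FreeSemigroup (Fin n)) : ℕ := expt (fun _ => 1) w

lemma elen_of {n : ℕ} (j : Fin n) : elen (FreeSemigroup.of j) = 1 := expt_of _ j

lemma elen_mul {n : ℕ} (u v : FreeSemigroup (Fin n)) : elen (u * v) = elen u + elen v :=
  expt_mul _ u v

lemma expt_const {n : ℕ} (s : ℕ) (w : FreeSemigroup (Fin n)) :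
    expt (fun _ => s) w = s * elen w := by
  show _ = s * expt (fun _ => 1) w
  refine FreeSemigroup.recOnMul w (fun j => ?_) (fun x y ih1 ih2 => ?_)
  · simp [expt_of]
  · simp only [expt_mul, ih1, ih2]; ring

lemma one_le_elen {n : ℕ} (w : FreeSemigroup (Fin n)) : 1 ≤ elen w := by
  refine FreeSemigroup.recOnMul w (fun j => ?_) (fun x y ih1 ih2 => ?_)
  · rw [elen_of]
  · rw [elen_mul]; omega

lemma lift_pow {n : ℕ} {M : Type*} [Monoid M] (b : M) (e : Fin n → ℕ) (w : FreeSemigroup (Fin n)) :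
    FreeSemigroup.lift (fun j => b ^ e j) w = b ^ expt e w := by
  refine FreeSemigroup.recOnMul w (fun j => ?_) (fun x y ih1 ih2 => ?_)
  · simp [expt_of]
  · rw [map_mul, ih1, ih2, expt_mul, pow_add]

lemma coe_lift {n : ℕ} {S : Type*} [Semigroup S] (p : Fin n → S) (w : FreeSemigroup (Fin n)) :
    ((FreeSemigroup.lift p w : S) : WithOne S) =
      FreeSemigroup.lift (fun j => ((p j : S) : WithOne S)) w := by
  refine FreeSemigroup.recOnMul w (fun j => ?_) (fun x y ih1 ih2 => ?_)
  · simp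
  · rw [map_mul, map_mul, WithOne.coe_mul, ih1, ih2]

def ppow {S : Type*} [Semigroup S] (a : S) : ℕ → S
  | 0 => a
  | n + 1 => ppow a n * a

lemma coe_ppow {S : Type*} [Semigroup S] (a : S) (n : ℕ) :
    ((ppow a n : S) : WithOne S) = (a : WithOne S) ^ (n + 1) := by
  induction n with
  | zero => simp [ppow]
  | succ n ih =>
    rw [show ppow a (n+1) = ppow a n * a from rfl, WithOne.coe_mul, ih]
    exact (pow_succ _ _).symm

lemma core {M : Type*} [Monoid M] (b : M) (L L' B B' D D' : ℕ)
    (hL : 1 ≤ L) (hL' : 1 ≤ L')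
    (h1 : ∀ t : ℕ, b ^ ((t+1)*L + B) = b ^ ((t+1)*L' + B'))
    (h2 : ∀ t : ℕ, b ^ ((t+1)*L + D) = b ^ ((t+1)*L' + D'))
    (h3 : ∀ t : ℕ, b ^ ((t+1)*L) = b ^ ((t+1)*L')) :
    b ^ (2*L + B + D) = b ^ (2*L' + B' + D') := by
  classical
  by_cases hinj : ∀ x y : ℕ, b ^ x = b ^ y → x = y
  · have e1 := hinj _ _ (h1 1)
    have e2 := hinj _ _ (h2 1)
    have e3 := hinj _ _ (h3 1)
    have : 2*L + B + D = 2*L' + B' + D' := by omega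
    rw [this]
  · push_neg at hinj
    obtain ⟨x0, y0, hxy, hne⟩ := hinj
    have hP : ∃ m, ∃ nn, m < nn ∧ b ^ m = b ^ nn := by
      rcases Nat.lt_or_ge x0 y0 with h | h
      · exact ⟨x0, y0, h, hxy⟩
      · exact ⟨y0, x0, by omega, hxy.symm⟩
    set i := Nat.find hP with hi
    obtain ⟨n0, hin0, hbn0⟩ := Nat.find_spec hP
    have hQ : ∃ p, 0 < p ∧ b ^ i = b ^ (i + p) :=
      ⟨n0 - i, by omega, by rw [hbn0]; congr 1; omega⟩
    set per := Nat.find hQ with hper_def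
    obtain ⟨hper_pos, hper⟩ := Nat.find_spec hQ
    have step : ∀ x, i ≤ x → b ^ (x + per) = b ^ x := by
      intro x hx
      have hx' : x + per = (x - i) + (i + per) := by omega
      have hx'' : x = (x - i) + i := by omega
      rw [hx', pow_add, ← hper, ← pow_add, ← hx'']
    have K : ∀ x, i ≤ x → ∀ k, b ^ (x + k * per) = b ^ x := by
      intro x hx k
      induction k with
      | zero => simp
      | succ k ih =>
        have hh : x + (k+1) * per = (x + k * per) + per := by ring
        rw [hh, step _ (by omega), ih]
    have F1 : ∀ x y : ℕ, b ^ x = b ^ y → x ≠ y → i ≤ x ∧ i ≤ y := by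
      intro x y hb hxy'
      have hmin : i ≤ min x y := by
        apply Nat.find_min' hP
        rcases Nat.lt_or_ge x y with h | h
        · exact ⟨y, by omega, by rw [min_eq_left h.le]; exact hb⟩
        · exact ⟨x, by omega, by rw [min_eq_right h]; exact hb.symm⟩
      omega
    have F2 : ∀ x y : ℕ, i ≤ x → i ≤ y → (per : ℤ) ∣ (x : ℤ) - (y : ℤ) → b ^ x = b ^ y := by
      have main : ∀ x y : ℕ, i ≤ x → x ≤ y → per ∣ (y - x) → b ^ x = b ^ y := by
        intro x y hx hxle hdvd
        obtain ⟨k, hk⟩ := hdvd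
        have hy' : y = x + k * per := by
          have hc : k * per = per * k := Nat.mul_comm _ _
          omega
        rw [hy']
        exact (K x hx k).symm
      intro x y hx hy hdvd
      rcases le_total x y with h | h
      · refine main x y hx h ?_
        have h4 : (per : ℤ) ∣ ((y - x : ℕ) : ℤ) := by
          rw [Int.natCast_sub h]
          simpa [neg_sub] using (dvd_neg.mpr hdvd)
        exact_mod_cast h4
      · refine (main y x hy h ?_).symm
        have h4 : (per : ℤ) ∣ ((x - y : ℕ) : ℤ) := by
          rw [Int.natCast_sub h]
          exact hdvd
        exact_mod_cast h4
    have reduce : ∀ x, i ≤ x → b ^ x = b ^ (i + (x - i) % per) := by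
      intro x hx
      calc b ^ x = b ^ ((i + (x - i) % per) + ((x - i) / per) * per) := by
            congr 1
            have h0 := Nat.div_add_mod (x - i) per
            have hc : (x - i) / per * per = per * ((x - i) / per) := Nat.mul_comm _ _
            omega
        _ = b ^ (i + (x - i) % per) := K _ (by omega) _
    have period_min : ∀ r r', r < r' → r' < per → b ^ (i + r) ≠ b ^ (i + r') := by
      intro r r' hrr' hr'per heq
      have h1' : b ^ (i + r) * b ^ (per - r') = b ^ (i + r') * b ^ (per - r') := by rw [heq]
      rw [← pow_add, ← pow_add] at h1'
      have e1' : i + r' + (per - r') = i + per := by omega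
      have e2' : i + r + (per - r') = i + (per - (r' - r)) := by omega
      rw [e1', e2', ← hper] at h1'
      exact (Nat.find_min hQ (show per - (r' - r) < per by omega)) ⟨by omega, h1'.symm⟩
    have F2' : ∀ x y : ℕ, i ≤ x → i ≤ y → b ^ x = b ^ y → (per : ℤ) ∣ (x : ℤ) - (y : ℤ) := by
      intro x y hx hy hb
      have hbr : b ^ (i + (x - i) % per) = b ^ (i + (y - i) % per) := by
        rw [← reduce x hx, ← reduce y hy, hb]
      have hrr : (x - i) % per = (y - i) % per := by
        by_contra hne'
        rcases Nat.lt_or_ge ((x - i) % per) ((y - i) % per) with h | h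
        · exact period_min _ _ h (Nat.mod_lt _ hper_pos) hbr
        · exact period_min _ _ (by omega) (Nat.mod_lt _ hper_pos) hbr.symm
      have hx2 := Nat.div_add_mod (x - i) per
      have hy2 := Nat.div_add_mod (y - i) per
      have key : (x : ℤ) - y = (((per * ((x - i) / per) : ℕ)) : ℤ) - (((per * ((y - i) / per) : ℕ)) : ℤ) := by
        omega
      rw [Nat.cast_mul, Nat.cast_mul] at key
      exact ⟨(((x - i) / per : ℕ) : ℤ) - (((y - i) / per : ℕ) : ℤ), by rw [key]; ring⟩
    by_cases hsmall : 2*L + B + D < i ∨ 2*L' + B' + D' < i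
    · have hLL : 2*L = 2*L' := by
        by_contra hne'
        have h3' : b ^ (2*L) = b ^ (2*L') := by
          have := h3 1; norm_num at this; convert this using 2
        have := F1 _ _ h3' hne'
        omega
      have hBB : 2*L + B = 2*L' + B' := by
        by_contra hne'
        have h1' : b ^ (2*L + B) = b ^ (2*L' + B') := by
          have := h1 1; norm_num at this; convert this using 2
        have := F1 _ _ h1' hne'
        omega
      have hDD : 2*L + D = 2*L' + D' := by
        by_contra hne'
        have h2' : b ^ (2*L + D) = b ^ (2*L' + D') := by
          have := h2 1; norm_num at this; convert this using 2
        have := F1 _ _ h2' hne'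
        omega
      have : 2*L + B + D = 2*L' + B' + D' := by omega
      rw [this]
    · push_neg at hsmall
      obtain ⟨hX, hY⟩ := hsmall
      have big : ∀ t : ℕ, i ≤ t → (i ≤ (t+1)*L ∧ i ≤ (t+1)*L') := by
        intro t ht
        constructor
        · calc i ≤ t + 1 := by omega
            _ = (t+1) * 1 := (mul_one _).symm
            _ ≤ (t+1) * L := Nat.mul_le_mul_left _ hL
        · calc i ≤ t + 1 := by omega
            _ = (t+1) * 1 := (mul_one _).symm
            _ ≤ (t+1) * L' := Nat.mul_le_mul_left _ hL'
      have d3 := F2' _ _ ((big i le_rfl).1) ((big i le_rfl).2) (h3 i)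
      have d3' := F2' _ _ ((big (i+1) (by omega)).1) ((big (i+1) (by omega)).2) (h3 (i+1))
      have dL : (per : ℤ) ∣ (L : ℤ) - L' := by
        have h := dvd_sub d3' d3
        have e : (((i+1+1)*L : ℕ) : ℤ) - (((i+1+1)*L' : ℕ) : ℤ) -
            ((((i+1)*L : ℕ) : ℤ) - (((i+1)*L' : ℕ) : ℤ)) = (L : ℤ) - L' := by
          push_cast; ring
        rwa [e] at h
      have hbB : i ≤ (i+1)*L + B := le_trans (big i le_rfl).1 (by omega)
      have hbB' : i ≤ (i+1)*L' + B' := le_trans (big i le_rfl).2 (by omega)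
      have dB : (per : ℤ) ∣ (B : ℤ) - B' := by
        have h := F2' _ _ hbB hbB' (h1 i)
        have h2'' := dvd_sub h (dL.mul_left ((i:ℤ)+1))
        have e : (((i+1)*L + B : ℕ) : ℤ) - (((i+1)*L' + B' : ℕ) : ℤ) -
            ((i:ℤ)+1) * ((L : ℤ) - L') = (B : ℤ) - B' := by push_cast; ring
        rwa [e] at h2''
      have hbD : i ≤ (i+1)*L + D := le_trans (big i le_rfl).1 (by omega)
      have hbD' : i ≤ (i+1)*L' + D' := le_trans (big i le_rfl).2 (by omega)
      have dD : (per : ℤ) ∣ (D : ℤ) - D' := by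
        have h := F2' _ _ hbD hbD' (h2 i)
        have h2'' := dvd_sub h (dL.mul_left ((i:ℤ)+1))
        have e : (((i+1)*L + D : ℕ) : ℤ) - (((i+1)*L' + D' : ℕ) : ℤ) -
            ((i:ℤ)+1) * ((L : ℤ) - L') = (D : ℤ) - D' := by push_cast; ring
        rwa [e] at h2''
      apply F2 _ _ hX hY
      have hsum := dvd_add (dvd_add (dL.mul_left 2) dB) dD
      have e : 2 * ((L:ℤ) - L') + ((B:ℤ) - B') + ((D:ℤ) - D') =
          ((2*L + B + D : ℕ) : ℤ) - ((2*L' + B' + D' : ℕ) : ℤ) := by push_cast; ring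
      rwa [e] at hsum

end Aux

theorem not_algebraic_of_sq_ne_cube {S : Type*} [Semigroup S]
    (h : ∃ a : S, a * a ≠ a * a * a) :
    ¬ IsAlgebraicSet {p : Fin 4 → S | p 0 = p 1 ∨ p 2 = p 3} := by
  classical
  obtain ⟨a, ha⟩ := h
  rintro ⟨Eqs, hEqs⟩
  set b : WithOne S := (a : WithOne S) with hb
  set δ1 : Fin 4 → ℕ := fun j => if j = 1 then 1 else 0 with hδ1
  set δ3 : Fin 4 → ℕ := fun j => if j = 3 then 1 else 0 with hδ3
  set evq : Fin 4 → ℕ := ![1, 2, 1, 2] with hevq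
  set q : Fin 4 → S := fun j => ppow a (evq j) with hq
  -- q is not in the set
  have hqnot : q ∉ {p : Fin 4 → S | p 0 = p 1 ∨ p 2 = p 3} := by
    intro hmem
    have h01 : q 0 = a * a := by simp [hq, hevq, ppow]
    have h11 : q 1 = a * a * a := by simp [hq, hevq, ppow]
    have h21 : q 2 = a * a := by simp [hq, hevq, ppow]
    have h31 : q 3 = a * a * a := by simp [hq, hevq, ppow]
    rcases hmem with h' | h'
    · exact ha (h01 ▸ h11 ▸ h')
    · exact ha (h21 ▸ h31 ▸ h')
  rw [hEqs] at hqnot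
  simp only [Set.mem_setOf_eq] at hqnot
  push_neg at hqnot
  obtain ⟨eq0, heq0, hfail⟩ := hqnot
  -- evaluation of lifted words at power points
  have key : ∀ (ev : Fin 4 → ℕ) (w : FreeSemigroup (Fin 4)),
      ((FreeSemigroup.lift (fun j => ppow a (ev j)) w : S) : WithOne S)
        = b ^ expt (fun j => ev j + 1) w := by
    intro ev w
    rw [coe_lift]
    have hfun : (fun j => ((ppow a (ev j) : S) : WithOne S))
        = fun j => b ^ (ev j + 1) := by
      funext j; exact coe_ppow a (ev j)
    rw [hfun, lift_pow]
  -- satisfaction on the two diagonals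
  have hsat : ∀ (ev : Fin 4 → ℕ), (ev 0 = ev 1 ∨ ev 2 = ev 3) →
      b ^ expt (fun j => ev j + 1) eq0.1 = b ^ expt (fun j => ev j + 1) eq0.2 := by
    intro ev hev
    have hmem : (fun j => ppow a (ev j)) ∈ {p : Fin 4 → S | p 0 = p 1 ∨ p 2 = p 3} := by
      rcases hev with h' | h'
      · exact Or.inl (by simp only [h'])
      · exact Or.inr (by simp only [h'])
    rw [hEqs] at hmem
    have hsateq := hmem eq0 heq0
    have hc := congrArg (fun s : S => (s : WithOne S)) hsateq
    rw [key ev eq0.1, key ev eq0.2] at hc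
    exact hc
  -- vector decompositions
  have vec1 : ∀ t : ℕ, (fun j : Fin 4 => (if j = 1 then t + 1 else t) + 1)
      = (fun _ : Fin 4 => t + 1) + δ1 := by
    intro t; funext j
    by_cases hj : j = 1 <;> simp [hδ1, hj]
  have vec2 : ∀ t : ℕ, (fun j : Fin 4 => (if j = 3 then t + 1 else t) + 1)
      = (fun _ : Fin 4 => t + 1) + δ3 := by
    intro t; funext j
    by_cases hj : j = 3 <;> simp [hδ3, hj]
  have vecq : (fun j : Fin 4 => evq j + 1) = ((fun _ : Fin 4 => 2) + δ1) + δ3 := by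
    funext j; fin_cases j <;> simp [hevq, hδ1, hδ3]
  have exptq : ∀ w : FreeSemigroup (Fin 4), expt (fun j => evq j + 1) w
      = 2 * elen w + expt δ1 w + expt δ3 w := by
    intro w
    rw [vecq, expt_add, expt_add, expt_const]
  have h1 : ∀ t : ℕ, b ^ ((t+1) * elen eq0.1 + expt δ1 eq0.1)
      = b ^ ((t+1) * elen eq0.2 + expt δ1 eq0.2) := by
    intro t
    have hh := hsat (fun j => if j = 1 then t + 1 else t) (Or.inr (by simp))
    rw [vec1 t] at hh
    simp only [expt_add, expt_const] at hh
    exact hh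
  have h2 : ∀ t : ℕ, b ^ ((t+1) * elen eq0.1 + expt δ3 eq0.1)
      = b ^ ((t+1) * elen eq0.2 + expt δ3 eq0.2) := by
    intro t
    have hh := hsat (fun j => if j = 3 then t + 1 else t) (Or.inl (by simp))
    rw [vec2 t] at hh
    simp only [expt_add, expt_const] at hh
    exact hh
  have h3 : ∀ t : ℕ, b ^ ((t+1) * elen eq0.1) = b ^ ((t+1) * elen eq0.2) := by
    intro t
    have hh := hsat (fun _ => t) (Or.inl rfl)
    simp only [expt_const] at hh
    exact hh
  have hcore := core b (elen eq0.1) (elen eq0.2) (expt δ1 eq0.1) (expt δ1 eq0.2)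
    (expt δ3 eq0.1) (expt δ3 eq0.2) (one_le_elen _) (one_le_elen _) h1 h2 h3
  apply hfail
  show FreeSemigroup.lift q eq0.1 = FreeSemigroup.lift q eq0.2
  have hc1 := key evq eq0.1
  have hc2 := key evq eq0.2
  rw [exptq] at hc1 hc2
  apply WithOne.coe_inj.mp
  rw [hq, hc1, hc2]
  exact hcore
end

section
/- Let S be a semigroup, let a ∈ S, and let τ and σ be terms in four variables x₁, x₂, x₃, x₄ over the language {·}. If the equation τ = σ is satisfied at both points P₁ = (a², a, a, a) and P₂ = (a, a, a², a) of S⁴, then it is also satisfied at the point Q = (a³, a², a³, a²). -/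
private lemma commute_lift {S : Type*} [Semigroup S] {n : ℕ} (c : S) (p : Fin n → S)
    (h : ∀ i, Commute c (p i)) (w : FreeSemigroup (Fin n)) :
    Commute c (FreeSemigroup.lift p w) := by
  induction w using FreeSemigroup.recOnMul with
  | ih1 i => simpa using h i
  | ih2 u v hu hv =>
    rw [map_mul, FreeSemigroup.lift_of]
    exact (h u).mul_right hv

private lemma lift_mul_point {S : Type*} [Semigroup S] {n : ℕ} (p q : Fin n → S)
    (h : ∀ i j, Commute (q i) (p j)) (w : FreeSemigroup (Fin n)) :
    FreeSemigroup.lift (fun i => p i * q i) w =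
      FreeSemigroup.lift p w * FreeSemigroup.lift q w := by
  induction w using FreeSemigroup.recOnMul with
  | ih1 i => simp
  | ih2 u v hu hv =>
    simp only [map_mul, FreeSemigroup.lift_of, hv]
    rw [mul_assoc, mul_assoc]
    congr 1
    rw [← mul_assoc, ← mul_assoc]
    congr 1
    exact (commute_lift (q u) p (h u) v).eq

theorem satisfies_at_Q_of_satisfies_at_P1_P2 {S : Type*} [Semigroup S] (a : S)
    (τ σ : FreeSemigroup (Fin 4))
    (h₁ : SatisfiesEquation (τ, σ) ![a * a, a, a, a])
    (h₂ : SatisfiesEquation (τ, σ) ![a, a, a * a, a]) :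
    SatisfiesEquation (τ, σ) ![a * a * a, a * a, a * a * a, a * a] := by
  have hcomm : ∀ i j : Fin 4, Commute ((![a, a, a * a, a] : Fin 4 → S) i)
      ((![a * a, a, a, a] : Fin 4 → S) j) := by
    intro i j
    fin_cases i <;> fin_cases j <;>
      simp [Commute, SemiconjBy, mul_assoc]
  have hpt : (fun i => (![a * a, a, a, a] : Fin 4 → S) i * (![a, a, a * a, a] : Fin 4 → S) i)
      = ![a * a * a, a * a, a * a * a, a * a] := by
    funext i
    fin_cases i <;> simp [mul_assoc]
  unfold SatisfiesEquation at *
  simp only at h₁ h₂ ⊢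
  rw [← hpt, lift_mul_point _ _ hcomm, lift_mul_point _ _ hcomm, h₁, h₂]
end
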